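/- Let h > 0 and N ∈ ℕ with N ≥ 2. Let u : ℝ → ℝ be differentiable on [0, Nh], and suppose there is g ∈ L²(0, Nh) such that u'(x₂) − u'(x₁) = ∫_{x₁}^{x₂} g(t) dt for all 0 ≤ x₁ ≤ x₂ ≤ Nh. For i = 1,…,N let x_i ∈ [(i−1)h, i·h]. Then ∑_{i=1}^{N−1} (u'(x_{i+1}) − u'(x_i))² ≤ 4h·∫₀^{Nh} g(t)² dt. -/

import Mathlib

set_option maxHeartbeats 1000000

open MeasureTheory

/-- Cauchy–Schwarz for set integrals over `Ioc a b`. -/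
lemma cs_sq_integral (a b : ℝ) (hab : a ≤ b) (g : ℝ → ℝ)
    (hg : MemLp g 2 (volume.restrict (Set.Ioc a b))) :
    (∫ t in Set.Ioc a b, g t) ^ 2 ≤ (b - a) * ∫ t in Set.Ioc a b, g t ^ 2 := by
  set μ := volume.restrict (Set.Ioc a b) with hμ
  haveI : IsFiniteMeasure μ := by
    constructor
    rw [hμ, Measure.restrict_apply_univ, Real.volume_Ioc]
    exact ENNReal.ofReal_lt_top
  have hconj : Real.HolderConjugate 2 2 := Real.HolderConjugate.two_two
  have hga : MemLp (fun t => |g t|) 2 μ := by simpa [Real.norm_eq_abs] using hg.norm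
  have hone : MemLp (fun _ : ℝ => (1 : ℝ)) 2 μ := memLp_const 1
  have hH := integral_mul_le_Lp_mul_Lq_of_nonneg (μ := μ) hconj
    (f := fun _ => (1 : ℝ)) (g := fun t => |g t|)
    (Filter.Eventually.of_forall fun _ => zero_le_one)
    (Filter.Eventually.of_forall fun t => abs_nonneg _)
    (by simpa using hone) (by simpa using hga)
  simp only [one_mul] at hH
  have h1 : ∫ t, (1 : ℝ) ^ (2 : ℝ) ∂μ = b - a := by
    simp [hμ, Real.volume_Ioc, ENNReal.toReal_ofReal (sub_nonneg.mpr hab), hab]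
  have h2 : ∫ t, |g t| ^ (2 : ℝ) ∂μ = ∫ t, g t ^ 2 ∂μ := by
    refine integral_congr_ae (Filter.Eventually.of_forall fun t => ?_)
    simp only [show ((2:ℝ) = ((2:ℕ):ℝ)) by norm_num, Real.rpow_natCast, sq_abs]
  rw [h1, h2] at hH
  set I := ∫ t, g t ^ 2 ∂μ with hI
  have hInn : 0 ≤ I := integral_nonneg fun t => sq_nonneg _
  have hba : 0 ≤ b - a := sub_nonneg.mpr hab
  have habs : |∫ t, g t ∂μ| ≤ ∫ t, |g t| ∂μ := by
    simpa [Real.norm_eq_abs] using norm_integral_le_integral_norm (f := g) (μ := μ)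
  have hkey : |∫ t, g t ∂μ| ≤ (b - a) ^ ((1:ℝ)/2) * I ^ ((1:ℝ)/2) := by
    calc |∫ t, g t ∂μ| ≤ ∫ t, |g t| ∂μ := habs
    _ ≤ (b - a) ^ ((1:ℝ)/2) * I ^ ((1:ℝ)/2) := by simpa using hH
  have hsq : ((b - a) ^ ((1:ℝ)/2) * I ^ ((1:ℝ)/2)) ^ 2 = (b - a) * I := by
    rw [mul_pow, ← Real.rpow_natCast ((b - a) ^ ((1:ℝ)/2)) 2,
      ← Real.rpow_natCast (I ^ ((1:ℝ)/2)) 2, ← Real.rpow_mul hba, ← Real.rpow_mul hInn]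
    norm_num
  calc (∫ t, g t ∂μ) ^ 2 = |∫ t, g t ∂μ| ^ 2 := (sq_abs _).symm
  _ ≤ ((b - a) ^ ((1:ℝ)/2) * I ^ ((1:ℝ)/2)) ^ 2 := by
      exact pow_le_pow_left₀ (abs_nonneg _) hkey 2
  _ = (b - a) * I := hsq

/-- Control of the squared differences of slopes of the piecewise-linear interpolant
of an `H²` function: if `u` is differentiable on `[0, Nh]` with derivative `u'`
whose increments are given by integrating `g ∈ L²(0, Nh)`, and `xᵢ ∈ [(i−1)h, ih]`,
then `∑_{i=1}^{N−1} (u'(x_{i+1}) − u'(x i))² ≤ 4h·∫₀^{Nh} g²`. -/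
theorem slope_difference_bound
    (h : ℝ) (hh : 0 < h) (N : ℕ) (hN : 2 ≤ N)
    (u u' : ℝ → ℝ)
    (hdiff : ∀ x ∈ Set.Icc (0 : ℝ) ((N : ℝ) * h),
      HasDerivWithinAt u (u' x) (Set.Icc (0 : ℝ) ((N : ℝ) * h)) x)
    (g : ℝ → ℝ)
    (hg : MeasureTheory.MemLp g 2 (MeasureTheory.volume.restrict (Set.Ioc (0 : ℝ) ((N : ℝ) * h))))
    (hftc : ∀ x₁ x₂ : ℝ, 0 ≤ x₁ → x₁ ≤ x₂ → x₂ ≤ (N : ℝ) * h →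
      u' x₂ - u' x₁ = ∫ t in x₁..x₂, g t)
    (x : ℕ → ℝ)
    (hx : ∀ i : ℕ, 1 ≤ i → i ≤ N → x i ∈ Set.Icc (((i : ℝ) - 1) * h) ((i : ℝ) * h)) :
    ∑ i ∈ Finset.Icc 1 (N - 1), (u' (x (i + 1)) - u' (x i)) ^ 2 ≤
      4 * h * ∫ t in (0 : ℝ)..(N : ℝ) * h, (g t) ^ 2 := by
  set L := (N : ℝ) * h with hLdef
  have hNR : (1:ℝ) ≤ (N : ℝ) := by exact_mod_cast Nat.one_le_of_lt hN
  have hL0 : 0 ≤ L := by positivity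
  have hgsq : IntegrableOn (fun t => g t ^ 2) (Set.Ioc (0:ℝ) L) := hg.integrable_sq
  -- interval integrability of g² on subintervals of [0, L]
  have hii : ∀ a b : ℝ, 0 ≤ a → a ≤ b → b ≤ L →
      IntervalIntegrable (fun t => g t ^ 2) volume a b := fun a b h0 hab hbL =>
    (intervalIntegrable_iff_integrableOn_Ioc_of_le hab).2
      (hgsq.mono_set (Set.Ioc_subset_Ioc h0 hbL))
  set A : ℕ → ℝ := fun i => ∫ t in ((i:ℝ) - 1) * h..(i:ℝ) * h, g t ^ 2 with hA
  set I := ∫ t in (0:ℝ)..L, g t ^ 2 with hIdef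
  -- per-term bound
  have hterm : ∀ i ∈ Finset.Icc 1 (N - 1),
      (u' (x (i + 1)) - u' (x i)) ^ 2 ≤ 2 * h * (A i + A (i + 1)) := by
    intro i hi
    rw [Finset.mem_Icc] at hi
    obtain ⟨hi1, hi2⟩ := hi
    have hiN : i ≤ N := by omega
    have hi1N : i + 1 ≤ N := by omega
    have hi1R : (1:ℝ) ≤ (i:ℝ) := by exact_mod_cast hi1
    have hiNR : (i:ℝ) ≤ (N:ℝ) := by exact_mod_cast hiN
    have hi1NR : (i:ℝ) + 1 ≤ (N:ℝ) := by exact_mod_cast hi1N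
    obtain ⟨hxl, hxr⟩ := hx i hi1 hiN
    obtain ⟨hxl', hxr'⟩ := hx (i + 1) (by omega) hi1N
    have hxl2 : (i:ℝ) * h ≤ x (i + 1) := by push_cast at hxl'; linarith
    have hxr2 : x (i + 1) ≤ ((i:ℝ) + 1) * h := by push_cast at hxr'; linarith
    have h0xi : 0 ≤ x i := le_trans (by nlinarith) hxl
    have hxiL : x (i + 1) ≤ L := le_trans hxr2 (by rw [hLdef]; nlinarith)
    have hle : x i ≤ x (i + 1) := hxr.trans hxl2
    have heq : u' (x (i + 1)) - u' (x i) = ∫ t in Set.Ioc (x i) (x (i + 1)), g t := by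
      rw [hftc (x i) (x (i + 1)) h0xi hle hxiL, intervalIntegral.integral_of_le hle]
    have hcs := cs_sq_integral (x i) (x (i + 1)) hle g
      (hg.mono_measure (Measure.restrict_mono (Set.Ioc_subset_Ioc h0xi hxiL) le_rfl))
    have hil0 : 0 ≤ ((i:ℝ) - 1) * h := by nlinarith
    have hi1L : ((i:ℝ) + 1) * h ≤ L := by rw [hLdef]; nlinarith
    have hJmono : (∫ t in Set.Ioc (x i) (x (i + 1)), g t ^ 2)
        ≤ ∫ t in Set.Ioc (((i:ℝ) - 1) * h) (((i:ℝ) + 1) * h), g t ^ 2 :=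
      setIntegral_mono_set (hgsq.mono_set (Set.Ioc_subset_Ioc hil0 hi1L))
        (Filter.Eventually.of_forall fun t => sq_nonneg _)
        ((Set.Ioc_subset_Ioc hxl hxr2).eventuallyLE)
    have hsplit : A i + A (i + 1)
        = ∫ t in Set.Ioc (((i:ℝ) - 1) * h) (((i:ℝ) + 1) * h), g t ^ 2 := by
      have hAi1 : A (i + 1) = ∫ t in (i:ℝ) * h..((i:ℝ) + 1) * h, g t ^ 2 := by
        simp only [hA]; congr 1 <;> push_cast <;> ring
      simp only [hA] at hAi1 ⊢; rw [hAi1,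
        intervalIntegral.integral_add_adjacent_intervals
          (hii _ _ hil0 (by nlinarith) (by rw [hLdef]; nlinarith))
          (hii _ _ (by nlinarith) (by nlinarith) hi1L),
        intervalIntegral.integral_of_le (by nlinarith)]
    have hJnn : 0 ≤ ∫ t in Set.Ioc (x i) (x (i + 1)), g t ^ 2 :=
      setIntegral_nonneg measurableSet_Ioc fun _ _ => sq_nonneg _
    calc (u' (x (i + 1)) - u' (x i)) ^ 2
        = (∫ t in Set.Ioc (x i) (x (i + 1)), g t) ^ 2 := by rw [heq]
    _ ≤ (x (i + 1) - x i) * ∫ t in Set.Ioc (x i) (x (i + 1)), g t ^ 2 := hcs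
    _ ≤ 2 * h * (A i + A (i + 1)) := by
        rw [hsplit]
        exact mul_le_mul (by nlinarith) hJmono hJnn (by linarith)
  -- telescoping sums
  have hIcc : Finset.Icc 1 (N - 1) = Finset.Ico 1 N := by
    rw [← Finset.Ico_add_one_right_eq_Icc]; congr 1; omega
  have hcastN : ((N - 1 : ℕ):ℝ) = (N:ℝ) - 1 := by
    push_cast [Nat.cast_sub (show 1 ≤ N by omega)]; ring
  have hnnae : 0 ≤ᵐ[volume.restrict (Set.Ioc (0:ℝ) L)] fun t => g t ^ 2 :=
    Filter.Eventually.of_forall fun t => sq_nonneg _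
  have hIL : IntervalIntegrable (fun t => g t ^ 2) volume 0 L := hii 0 L le_rfl hL0 le_rfl
  have hSA' : ∑ i ∈ Finset.Icc 1 (N - 1), A i ≤ I := by
    rw [hIcc, Finset.sum_Ico_eq_sum_range]
    have key := intervalIntegral.sum_integral_adjacent_intervals
      (f := fun t => g t ^ 2) (μ := volume) (a := fun k => (k:ℝ) * h) (n := N - 1)
      (fun k hk => by
        refine hii _ _ (by positivity) (by push_cast; nlinarith) ?_
        rw [hLdef]; push_cast
        have : (k:ℝ) + 1 ≤ (N:ℝ) := by exact_mod_cast (by omega : k + 1 ≤ N)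
        nlinarith)
    beta_reduce at key
    calc ∑ k ∈ Finset.range (N - 1), A (1 + k)
        = ∑ k ∈ Finset.range (N - 1), ∫ t in ((k:ℕ):ℝ) * h..(((k + 1 : ℕ)):ℝ) * h, g t ^ 2 :=
          Finset.sum_congr rfl fun j _ => by
            simp only [hA]; congr 1 <;> push_cast <;> ring
    _ = ∫ t in ((0:ℕ):ℝ) * h..((N - 1 : ℕ):ℝ) * h, g t ^ 2 := key
    _ ≤ I := by
        rw [hIdef]
        refine intervalIntegral.integral_mono_interval (by simp) ?_ ?_ hnnae hIL
        · rw [hcastN]; push_cast; nlinarith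
        · rw [hcastN, hLdef]; nlinarith
  have hSB' : ∑ i ∈ Finset.Icc 1 (N - 1), A (i + 1) ≤ I := by
    rw [hIcc, Finset.sum_Ico_eq_sum_range]
    have key := intervalIntegral.sum_integral_adjacent_intervals
      (f := fun t => g t ^ 2) (μ := volume) (a := fun k => ((k:ℝ) + 1) * h) (n := N - 1)
      (fun k hk => by
        refine hii _ _ (by positivity) (by push_cast; nlinarith) ?_
        rw [hLdef]; push_cast
        have : (k:ℝ) + 2 ≤ (N:ℝ) := by exact_mod_cast (by omega : k + 2 ≤ N)
        nlinarith)
    beta_reduce at key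
    calc ∑ k ∈ Finset.range (N - 1), A (1 + k + 1)
        = ∑ k ∈ Finset.range (N - 1),
            ∫ t in (((k:ℕ):ℝ) + 1) * h..((((k + 1 : ℕ)):ℝ) + 1) * h, g t ^ 2 :=
          Finset.sum_congr rfl fun j _ => by
            simp only [hA]; congr 1 <;> push_cast <;> ring
    _ = ∫ t in (((0:ℕ):ℝ) + 1) * h..(((N - 1 : ℕ):ℝ) + 1) * h, g t ^ 2 := key
    _ ≤ I := by
        rw [hIdef]
        refine intervalIntegral.integral_mono_interval ?_ ?_ ?_ hnnae hIL
        · push_cast; nlinarith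
        · rw [hcastN]; push_cast; nlinarith
        · rw [hcastN, hLdef]; nlinarith
  calc ∑ i ∈ Finset.Icc 1 (N - 1), (u' (x (i + 1)) - u' (x i)) ^ 2
      ≤ ∑ i ∈ Finset.Icc 1 (N - 1), 2 * h * (A i + A (i + 1)) := Finset.sum_le_sum hterm
  _ = 2 * h * ((∑ i ∈ Finset.Icc 1 (N - 1), A i) + ∑ i ∈ Finset.Icc 1 (N - 1), A (i + 1)) := by
      rw [← Finset.mul_sum, Finset.sum_add_distrib]
  _ ≤ 2 * h * (I + I) := by
      have h2h : 0 ≤ 2 * h := by linarith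
      exact mul_le_mul_of_nonneg_left (add_le_add hSA' hSB') h2h
  _ = 4 * h * I := by ring
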